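/- Let (u_S)_{S≥0} be a non-negative real sequence, (A_S)_{S≥0} a nondecreasing sequence with A_0 ≥ u_0², and λ_s ≥ 0 for all s, such that for all S ≥ 1: u_S² ≤ A_S + Σ_{s=1}^S λ_s u_s. Then for all S ≥ 1, u_S ≤ (1/2)Σ_{s=1}^S λ_s + ( A_S + ((1/2)Σ_{s=1}^S λ_s)² )^{1/2} ≤ sqrt(A_S) + Σ_{s=1}^S λ_s. -/

import Mathlib

/-- Schmidt–Roux–Bach recursion lemma: if a non-negative sequence
`(u_S)` satisfies `u_S² ≤ A_S + Σ_{s=1}^S λ_s u_s` for all `S ≥ 1`, where `(A_S)` is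
nondecreasing with `A_0 ≥ u_0²` and `λ_s ≥ 0`, then for all `S ≥ 1`,
`u_S ≤ (1/2)Σ_{s=1}^S λ_s + (A_S + ((1/2)Σ_{s=1}^S λ_s)²)^{1/2}
≤ sqrt(A_S) + Σ_{s=1}^S λ_s`. -/
theorem recursion_resolution_lemma
    (u A lam : ℕ → ℝ)
    (hu : ∀ s, 0 ≤ u s)
    (hlam : ∀ s, 0 ≤ lam s)
    (hA : Monotone A)
    (hA0 : u 0 ^ 2 ≤ A 0)
    (hrec : ∀ S, 1 ≤ S → u S ^ 2 ≤ A S + ∑ s ∈ Finset.Icc 1 S, lam s * u s) :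
    ∀ S, 1 ≤ S →
      u S ≤ (1 / 2) * ∑ s ∈ Finset.Icc 1 S, lam s
          + Real.sqrt (A S + ((1 / 2) * ∑ s ∈ Finset.Icc 1 S, lam s) ^ 2) ∧
      (1 / 2) * ∑ s ∈ Finset.Icc 1 S, lam s
          + Real.sqrt (A S + ((1 / 2) * ∑ s ∈ Finset.Icc 1 S, lam s) ^ 2)
        ≤ Real.sqrt (A S) + ∑ s ∈ Finset.Icc 1 S, lam s := by
  intro S hS
  set Λ := ∑ s ∈ Finset.Icc 1 S, lam s with hΛdef
  have hΛ : 0 ≤ Λ := Finset.sum_nonneg fun s _ => hlam s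
  have hAS0 : 0 ≤ A S := le_trans (le_trans (sq_nonneg _) hA0) (hA (Nat.zero_le S))
  obtain ⟨m, hm, hmax⟩ := Finset.exists_max_image (Finset.range (S + 1)) u ⟨0, by simp⟩
  have hmS : m ≤ S := Nat.lt_succ_iff.mp (Finset.mem_range.mp hm)
  have hM2 : u m ^ 2 ≤ A S + Λ * u m := by
    rcases Nat.eq_zero_or_pos m with h0 | h1
    · calc u m ^ 2 ≤ A 0 := by rw [h0]; exact hA0
        _ ≤ A S := hA (Nat.zero_le S)
        _ ≤ A S + Λ * u m := le_add_of_nonneg_right (mul_nonneg hΛ (hu m))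
    · calc u m ^ 2 ≤ A m + ∑ s ∈ Finset.Icc 1 m, lam s * u s := hrec m h1
        _ ≤ A S + ∑ s ∈ Finset.Icc 1 S, lam s * u s := by
            refine add_le_add (hA hmS) ?_
            refine Finset.sum_le_sum_of_subset_of_nonneg
              (Finset.Icc_subset_Icc_right hmS) ?_
            intro i _ _; exact mul_nonneg (hlam i) (hu i)
        _ ≤ A S + ∑ s ∈ Finset.Icc 1 S, lam s * u m := by
            refine add_le_add (le_refl _) (Finset.sum_le_sum fun s hs => ?_)
            refine mul_le_mul_of_nonneg_left ?_ (hlam s)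
            exact hmax s (Finset.mem_range.mpr
              (Nat.lt_succ_of_le (Finset.mem_Icc.mp hs).2))
        _ = A S + Λ * u m := by rw [hΛdef, Finset.sum_mul]
  have hkey : u m ≤ (1 / 2) * Λ + Real.sqrt (A S + ((1 / 2) * Λ) ^ 2) := by
    have h1 : (u m - (1 / 2) * Λ) ^ 2 ≤ A S + ((1 / 2) * Λ) ^ 2 := by nlinarith
    have h2 : u m - (1 / 2) * Λ ≤ Real.sqrt (A S + ((1 / 2) * Λ) ^ 2) := by
      calc u m - (1 / 2) * Λ ≤ |u m - (1 / 2) * Λ| := le_abs_self _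
        _ = Real.sqrt ((u m - (1 / 2) * Λ) ^ 2) := (Real.sqrt_sq_eq_abs _).symm
        _ ≤ _ := Real.sqrt_le_sqrt h1
    linarith
  have huS : u S ≤ u m := hmax S (Finset.mem_range.mpr (Nat.lt_succ_self S))
  have hsq : Real.sqrt (A S + ((1 / 2) * Λ) ^ 2) ≤ Real.sqrt (A S) + (1 / 2) * Λ := by
    have h3 : A S + ((1 / 2) * Λ) ^ 2 ≤ (Real.sqrt (A S) + (1 / 2) * Λ) ^ 2 := by
      nlinarith [Real.sq_sqrt hAS0, Real.sqrt_nonneg (A S)]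
    have := Real.sqrt_le_sqrt h3
    rwa [Real.sqrt_sq (by positivity)] at this
  exact ⟨le_trans huS hkey, by linarith⟩
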